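/- Let n ≥ 1. For every m with 0 ≤ m ≤ n one has {k ∈ K₀(pⁿ) : y(p^m)⁻¹ k y(p^m) ∈ K₀(pⁿ)} = {(a,b;c,d) ∈ K₀(pⁿ) : a − d + p^m b ∈ p^{n−m}ℤₚ}, and moreover {k ∈ K₀(pⁿ) : w⁻¹ k w ∈ K₀(pⁿ)} = {(a,b;c,d) ∈ K₀(pⁿ) : b ∈ pⁿℤₚ}; in particular the latter set contains every diagonal matrix of K. -/
import Mathlib


/-- `K = GL₂(ℤₚ)`, realized as the set of 2×2 matrices over `ℤ_[p]` with unit determinant. -/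
def Kfull (p : ℕ) [Fact p.Prime] : Set (Matrix (Fin 2) (Fin 2) ℤ_[p]) :=
  {g | IsUnit g.det}

/-- `K₀(pⁿ) = {(a,b;c,d) ∈ K : c ∈ pⁿℤₚ}`. -/
def K0 (p : ℕ) [Fact p.Prime] (n : ℕ) : Set (Matrix (Fin 2) (Fin 2) ℤ_[p]) :=
  {g | IsUnit g.det ∧ (p : ℤ_[p]) ^ n ∣ g 1 0}

/-- `w = (0,−1;1,0)`. -/
noncomputable def wMat (p : ℕ) [Fact p.Prime] : Matrix (Fin 2) (Fin 2) ℤ_[p] := !![0, -1; 1, 0]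

/-- `y(t) = (1,0;t,1)`. -/
noncomputable def yMat (p : ℕ) [Fact p.Prime] (t : ℤ_[p]) : Matrix (Fin 2) (Fin 2) ℤ_[p] :=
  !![1, 0; t, 1]


lemma yMat_inv (p : ℕ) [Fact p.Prime] (t : ℤ_[p]) : (yMat p t)⁻¹ = !![1, 0; -t, 1] := by
  apply Matrix.inv_eq_right_inv
  simp [yMat, Matrix.mul_fin_two, Matrix.one_fin_two]

lemma wMat_inv (p : ℕ) [Fact p.Prime] : (wMat p)⁻¹ = !![0, 1; -1, 0] := by
  apply Matrix.inv_eq_right_inv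
  simp [wMat, Matrix.mul_fin_two, Matrix.one_fin_two]

lemma pow_dvd_pow_mul_iff (p : ℕ) [Fact p.Prime] {m n : ℕ} (hm : m ≤ n) (x : ℤ_[p]) :
    (p : ℤ_[p]) ^ n ∣ (p : ℤ_[p]) ^ m * x ↔ (p : ℤ_[p]) ^ (n - m) ∣ x := by
  conv_lhs => rw [show n = m + (n - m) by omega, pow_add]
  exact mul_dvd_mul_iff_left (pow_ne_zero m (Nat.cast_ne_zero.mpr (Fact.out : p.Prime).pos.ne'))

/-- For `0 ≤ m ≤ n`:
`{k ∈ K₀(pⁿ) : y(p^m)⁻¹ k y(p^m) ∈ K₀(pⁿ)} = {(a,b;c,d) ∈ K₀(pⁿ) : a − d + p^m b ∈ p^{n−m}ℤₚ}`,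
`{k ∈ K₀(pⁿ) : w⁻¹ k w ∈ K₀(pⁿ)} = {(a,b;c,d) ∈ K₀(pⁿ) : b ∈ pⁿℤₚ}`, and the latter set
contains every diagonal matrix of `K`. -/
theorem stmt2 (p n : ℕ) [Fact p.Prime] (hn : 1 ≤ n) :
    (∀ m : ℕ, m ≤ n →
      {k : Matrix (Fin 2) (Fin 2) ℤ_[p] |
          k ∈ K0 p n ∧ (yMat p ((p : ℤ_[p]) ^ m))⁻¹ * k * yMat p ((p : ℤ_[p]) ^ m) ∈ K0 p n} =
        {k : Matrix (Fin 2) (Fin 2) ℤ_[p] |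
          k ∈ K0 p n ∧ (p : ℤ_[p]) ^ (n - m) ∣ (k 0 0 - k 1 1 + (p : ℤ_[p]) ^ m * k 0 1)}) ∧
    ({k : Matrix (Fin 2) (Fin 2) ℤ_[p] |
          k ∈ K0 p n ∧ (wMat p)⁻¹ * k * wMat p ∈ K0 p n} =
        {k : Matrix (Fin 2) (Fin 2) ℤ_[p] |
          k ∈ K0 p n ∧ (p : ℤ_[p]) ^ n ∣ k 0 1}) ∧
    (∀ a d : ℤ_[p], IsUnit a → IsUnit d →
      (!![a, 0; 0, d] : Matrix (Fin 2) (Fin 2) ℤ_[p]) ∈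
        {k : Matrix (Fin 2) (Fin 2) ℤ_[p] |
          k ∈ K0 p n ∧ (wMat p)⁻¹ * k * wMat p ∈ K0 p n}) := by
  have hw : ∀ k : Matrix (Fin 2) (Fin 2) ℤ_[p],
      (k ∈ K0 p n ∧ (wMat p)⁻¹ * k * wMat p ∈ K0 p n) ↔
      (k ∈ K0 p n ∧ (p : ℤ_[p]) ^ n ∣ k 0 1) := by
    intro k
    have hdet : ((wMat p)⁻¹ * k * wMat p).det = k.det := by
      rw [wMat_inv, Matrix.det_mul, Matrix.det_mul]
      simp [wMat, Matrix.det_fin_two_of]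
    have hent : ((wMat p)⁻¹ * k * wMat p) 1 0 = - k 0 1 := by
      rw [wMat_inv]
      simp [wMat, Matrix.mul_apply, Fin.sum_univ_two, Matrix.vecMul, dotProduct]
    constructor
    · rintro ⟨hk, _, h2⟩
      rw [hent, dvd_neg] at h2
      exact ⟨hk, h2⟩
    · rintro ⟨hk, hb⟩
      refine ⟨hk, ?_, ?_⟩
      · rw [hdet]; exact hk.1
      · rw [hent, dvd_neg]; exact hb
  refine ⟨?_, Set.ext fun k => hw k, ?_⟩
  · intro m hm
    ext k
    set t : ℤ_[p] := (p : ℤ_[p]) ^ m with ht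
    have hdet : ((yMat p t)⁻¹ * k * yMat p t).det = k.det := by
      rw [yMat_inv, Matrix.det_mul, Matrix.det_mul]
      simp [yMat, Matrix.det_fin_two_of]
    have hent : ((yMat p t)⁻¹ * k * yMat p t) 1 0
        = k 1 0 - t * (k 0 0 - k 1 1 + t * k 0 1) := by
      rw [yMat_inv]
      simp [yMat, Matrix.mul_apply, Fin.sum_univ_two, Matrix.vecMul, dotProduct]
      ring
    simp only [Set.mem_setOf_eq]
    constructor
    · rintro ⟨hk, _, h2⟩
      refine ⟨hk, ?_⟩
      rw [hent] at h2
      have h3 : (p : ℤ_[p]) ^ n ∣ t * (k 0 0 - k 1 1 + t * k 0 1) :=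
        (dvd_sub_right hk.2).mp h2
      rw [ht] at h3
      exact (pow_dvd_pow_mul_iff p hm _).mp h3
    · rintro ⟨hk, hb⟩
      refine ⟨hk, ?_, ?_⟩
      · rw [hdet]; exact hk.1
      · rw [hent]
        exact dvd_sub hk.2 ((pow_dvd_pow_mul_iff p hm _).mpr hb)
  · intro a d ha hd
    rw [Set.mem_setOf_eq, hw]
    constructor
    · constructor
      · simp [Matrix.det_fin_two_of]; exact ⟨ha, hd⟩
      · simp
    · simp
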